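/- For each real c with 0 ≤ c < 1 and K₁ > 0, the function ξ = (ξ₁, ξ₂) ↦ (|ξ|² + |ξ₁||ξ|)/(K₁|ξ|⁴ + |ξ|² − c ξ₁²) belongs to L²(ℝ²), and its L² norm is bounded by C/(1−c)^{1/4} for a constant C depending only on K₁. -/

import Mathlib

open MeasureTheory Real
open Set Filter Topology
open scoped ENNReal NNReal

/-- Cauchy-type integral bound: `∫ 1/(a t² + A)² dt ≤ π / (√a · A · √A)`. -/
lemma lintegral_inv_sq_bound (a A : ℝ) (ha : 0 < a) (hA : 0 < A) :
    ∫⁻ t : ℝ, ENNReal.ofReal (((a * t ^ 2 + A) ^ 2)⁻¹) ≤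
      ENNReal.ofReal (π / (Real.sqrt a * (A * Real.sqrt A))) := by
  set b := Real.sqrt (a / A) with hbdef
  have hb : 0 < b := Real.sqrt_pos.mpr (div_pos ha hA)
  have hb2 : b ^ 2 = a / A := Real.sq_sqrt (div_pos ha hA).le
  have key : ∀ t : ℝ, (a * t ^ 2 + A)⁻¹ = A⁻¹ * (1 + (b * t) ^ 2)⁻¹ := by
    intro t
    have h1 : 1 + (b * t) ^ 2 = (a * t ^ 2 + A) / A := by
      rw [mul_pow, hb2]; field_simp; ring
    have h2 : 0 < a * t ^ 2 + A := by positivity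
    rw [h1]; field_simp
  have hint : Integrable (fun t : ℝ => (a * t ^ 2 + A)⁻¹) := by
    have : Integrable (fun t : ℝ => A⁻¹ * (1 + (b * t) ^ 2)⁻¹) := by
      have h0 : Integrable (fun t : ℝ => (1 + t ^ 2)⁻¹) := integrable_inv_one_add_sq
      exact ((h0.comp_mul_left' hb.ne').const_mul _)
    exact this.congr (Filter.Eventually.of_forall fun t => (key t).symm)
  have hval : ∫ t : ℝ, (a * t ^ 2 + A)⁻¹ = π / (Real.sqrt a * Real.sqrt A) := by
    simp_rw [key]
    rw [MeasureTheory.integral_const_mul]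
    have := MeasureTheory.Measure.integral_comp_mul_left
      (fun x : ℝ => (1 + x ^ 2)⁻¹) b
    rw [this, integral_univ_inv_one_add_sq]
    rw [smul_eq_mul, abs_of_pos (inv_pos.mpr hb)]
    have hAA : Real.sqrt A * Real.sqrt A = A := Real.mul_self_sqrt hA.le
    have hsa : Real.sqrt a ≠ 0 := (Real.sqrt_pos.mpr ha).ne'
    have hsA : Real.sqrt A ≠ 0 := (Real.sqrt_pos.mpr hA).ne'
    rw [hbdef, Real.sqrt_div ha.le, inv_div]
    field_simp
    linear_combination hAA
  calc ∫⁻ t : ℝ, ENNReal.ofReal (((a * t ^ 2 + A) ^ 2)⁻¹)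
      ≤ ∫⁻ t : ℝ, ENNReal.ofReal (A⁻¹ * (a * t ^ 2 + A)⁻¹) := by
        apply lintegral_mono fun t => ENNReal.ofReal_le_ofReal ?_
        have h2 : 0 < a * t ^ 2 + A := by positivity
        rw [← mul_inv]
        apply inv_anti₀ (by positivity)
        nlinarith [mul_nonneg (mul_nonneg ha.le (sq_nonneg t)) h2.le]
    _ = ENNReal.ofReal A⁻¹ * ∫⁻ t : ℝ, ENNReal.ofReal ((a * t ^ 2 + A)⁻¹) := by
        simp_rw [ENNReal.ofReal_mul (by positivity : (0:ℝ) ≤ A⁻¹)]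
        rw [lintegral_const_mul' _ _ ENNReal.ofReal_ne_top]
    _ = ENNReal.ofReal A⁻¹ * ENNReal.ofReal (π / (Real.sqrt a * Real.sqrt A)) := by
        rw [← ofReal_integral_eq_lintegral_ofReal hint
          (Filter.Eventually.of_forall fun t => by positivity), hval]
    _ ≤ ENNReal.ofReal (π / (Real.sqrt a * (A * Real.sqrt A))) := by
        rw [← ENNReal.ofReal_mul (by positivity)]
        apply ENNReal.ofReal_le_ofReal
        rw [div_eq_mul_inv, div_eq_mul_inv]
        ring_nf
        exact le_refl _

/-- `∫_ℝ |t| / ((a+bt²)^{3/2}) dt = 2/(b√a)`, as a bound on the lintegral. -/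
lemma lintegral_abs_div_bound (a b : ℝ) (ha : 0 < a) (hb : 0 < b) :
    ∫⁻ t : ℝ, ENNReal.ofReal
        (|t| / ((a + b * t ^ 2) * Real.sqrt (a + b * t ^ 2))) ≤
      ENNReal.ofReal (2 / (b * Real.sqrt a)) := by
  set g : ℝ → ℝ := fun t => |t| / ((a + b * t ^ 2) * Real.sqrt (a + b * t ^ 2)) with hg
  set F : ℝ → ℝ := fun t => -(1 / b) * (Real.sqrt (a + b * t ^ 2))⁻¹ with hF
  set F' : ℝ → ℝ := fun t => t / ((a + b * t ^ 2) * Real.sqrt (a + b * t ^ 2)) with hF'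
  have hupos : ∀ t : ℝ, 0 < a + b * t ^ 2 := fun t => by positivity
  have hspos : ∀ t : ℝ, 0 < Real.sqrt (a + b * t ^ 2) :=
    fun t => Real.sqrt_pos.mpr (hupos t)
  have hderiv : ∀ t : ℝ, HasDerivAt F (F' t) t := by
    intro t
    have hu : HasDerivAt (fun t : ℝ => a + b * t ^ 2) (b * (2 * t)) t := by
      simpa using ((hasDerivAt_pow 2 t).const_mul b).const_add a
    have hs : HasDerivAt (fun t : ℝ => Real.sqrt (a + b * t ^ 2))
        (1 / (2 * Real.sqrt (a + b * t ^ 2)) * (b * (2 * t))) t :=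
      (Real.hasDerivAt_sqrt (hupos t).ne').comp t hu
    have hinv := (hs.inv (hspos t).ne').const_mul (-(1 / b))
    refine hinv.congr_deriv ?_
    symm
    have h1 : Real.sqrt (a + b * t ^ 2) ^ 2 = a + b * t ^ 2 :=
      Real.sq_sqrt (hupos t).le
    rw [hF']
    field_simp
    ring_nf
    rw [show t ^ 2 * b + a = a + b * t ^ 2 by ring, h1]
    ring
  have htend : Tendsto F atTop (𝓝 0) := by
    have h1 : Tendsto (fun t : ℝ => a + b * t ^ 2) atTop atTop := by
      apply tendsto_atTop_add_const_left
      exact (tendsto_pow_atTop (by norm_num)).const_mul_atTop hb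
    have hsq : Tendsto Real.sqrt atTop atTop := by
      rw [show Real.sqrt = fun x : ℝ => x ^ (1/2 : ℝ) from funext Real.sqrt_eq_rpow]
      exact tendsto_rpow_atTop (by norm_num)
    have h2 : Tendsto (fun t : ℝ => Real.sqrt (a + b * t ^ 2)) atTop atTop := hsq.comp h1
    have h3 := h2.inv_tendsto_atTop
    have h4 := h3.const_mul (-(1 / b))
    rw [mul_zero] at h4
    simpa [hF, one_div, neg_mul] using h4
  have hnn : ∀ t ∈ Ioi (0:ℝ), 0 ≤ F' t := fun t ht => by
    have := (hupos t); have := hspos t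
    exact div_nonneg (le_of_lt ht) (by positivity)
  have hFval : ∫ t in Ioi (0:ℝ), F' t = 1 / (b * Real.sqrt a) := by
    rw [integral_Ioi_of_hasDerivAt_of_nonneg' (fun t _ => hderiv t) hnn htend]
    simp [hF]
    field_simp
  have hIntOn : IntegrableOn F' (Ioi 0) volume :=
    integrableOn_Ioi_deriv_of_nonneg' (fun t _ => hderiv t) hnn htend
  -- split ℝ into Iic 0 and Ioi 0
  have hsplit : ∫⁻ t : ℝ, ENNReal.ofReal (g t) =
      (∫⁻ t in Iic (0:ℝ), ENNReal.ofReal (g t)) +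
        ∫⁻ t in Ioi (0:ℝ), ENNReal.ofReal (g t) := by
    rw [← lintegral_add_compl (fun t => ENNReal.ofReal (g t)) measurableSet_Iic, compl_Iic]
  have hmeas : Measurable fun t : ℝ => ENNReal.ofReal (g t) := by
    apply ENNReal.measurable_ofReal.comp
    apply Measurable.div
    · exact measurable_abs
    · exact (((measurable_const.add ((measurable_id.pow_const 2).const_mul b))).mul
        (Real.continuous_sqrt.measurable.comp
          (measurable_const.add ((measurable_id.pow_const 2).const_mul b))))
  have hneg : ∫⁻ t in Iic (0:ℝ), ENNReal.ofReal (g t) =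
      ∫⁻ t in Ioi (0:ℝ), ENNReal.ofReal (g t) := by
    have hemb : MeasurableEmbedding (fun x : ℝ => -x) :=
      (Homeomorph.neg ℝ).measurableEmbedding
    have hmn : Measurable fun x : ℝ => -x := measurable_neg
    have key := MeasureTheory.setLIntegral_map (μ := (volume : Measure ℝ))
      (s := Iic (0:ℝ)) (g := fun x : ℝ => -x)
      (f := fun t => ENNReal.ofReal (g t)) measurableSet_Iic hmeas hmn
    rw [Measure.map_neg_eq_self (volume : Measure ℝ)] at key
    rw [key]
    have hpre : (fun x : ℝ => -x) ⁻¹' Iic (0:ℝ) = Ici (0:ℝ) := by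
      ext x; simp
    rw [hpre]
    have hgev : ∀ x : ℝ, g (-x) = g x := by
      intro x; simp [hg, abs_neg]
    simp_rw [hgev]
    rw [← setLIntegral_congr (Ioi_ae_eq_Ici (a := (0:ℝ))).symm]
  have hIoi : ∫⁻ t in Ioi (0:ℝ), ENNReal.ofReal (g t) =
      ENNReal.ofReal (1 / (b * Real.sqrt a)) := by
    have : ∀ t ∈ Ioi (0:ℝ), ENNReal.ofReal (g t) = ENNReal.ofReal (F' t) := by
      intro t ht
      have habs : |t| = t := abs_of_pos ht
      simp only [hg, hF', habs]
    rw [setLIntegral_congr_fun measurableSet_Ioi this]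
    rw [← ofReal_integral_eq_lintegral_ofReal hIntOn]
    · rw [hFval]
    · exact (ae_restrict_iff' measurableSet_Ioi).2 (Filter.Eventually.of_forall hnn)
  rw [hsplit, hneg, hIoi, ← two_mul, ← ENNReal.ofReal_ofNat, ← ENNReal.ofReal_mul (by norm_num)]
  apply ENNReal.ofReal_le_ofReal
  rw [mul_one_div]

lemma quart_identity (p q s t : ℝ) (hp : 0 < p) (hq : 0 < q) :
    t ^ 4 * (π / (s * ((p * t ^ 2 + q * t ^ 4) * Real.sqrt (p * t ^ 2 + q * t ^ 4)))) =
      (π / s) * (|t| / ((p + q * t ^ 2) * Real.sqrt (p + q * t ^ 2))) := by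
  rcases eq_or_ne t 0 with rfl | ht
  · simp
  · have hw : 0 < p + q * t ^ 2 := by positivity
    have hsw : 0 < Real.sqrt (p + q * t ^ 2) := Real.sqrt_pos.mpr hw
    have h1 : p * t ^ 2 + q * t ^ 4 = t ^ 2 * (p + q * t ^ 2) := by ring
    rw [h1, Real.sqrt_mul (sq_nonneg t), Real.sqrt_sq_eq_abs]
    have habs : 0 < |t| := abs_pos.mpr ht
    have h2 : |t| * |t| = t * t := abs_mul_abs_self t
    have key : t ^ 4 / (t ^ 2 * (p + q * t ^ 2) * (|t| * Real.sqrt (p + q * t ^ 2))) =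
        |t| / ((p + q * t ^ 2) * Real.sqrt (p + q * t ^ 2)) := by
      rw [div_eq_div_iff (by positivity) (by positivity)]
      linear_combination (-(t ^ 2 * (p + q * t ^ 2) * Real.sqrt (p + q * t ^ 2))) * h2
    have swap : ∀ A c S X : ℝ, A * (c / (S * X)) = (c / S) * (A / X) := by
      intro A c S X
      rw [div_mul_eq_div_div]
      ring
    rw [swap, key]

set_option maxHeartbeats 1000000 in
lemma pointwise_bound (K₁ c : ℝ) (hK₁ : 0 < K₁) (hc : 0 ≤ c) (hc1 : c < 1) (x y : ℝ) :
    ((Real.sqrt (x ^ 2 + y ^ 2) ^ 2 + |x| * Real.sqrt (x ^ 2 + y ^ 2)) /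
        (K₁ * Real.sqrt (x ^ 2 + y ^ 2) ^ 4 + Real.sqrt (x ^ 2 + y ^ 2) ^ 2 - c * x ^ 2)) ^ 2 ≤
      8 * x ^ 4 * ((1 * y ^ 2 + ((1 - c) * x ^ 2 + K₁ * x ^ 4)) ^ 2)⁻¹ +
        8 * y ^ 4 * (((1 - c) * x ^ 2 + (1 * y ^ 2 + K₁ * y ^ 4)) ^ 2)⁻¹ := by
  by_cases h0 : x = 0 ∧ y = 0
  · obtain ⟨rfl, rfl⟩ := h0; simp
  · have hxy : 0 < x ^ 2 + y ^ 2 := by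
      rcases not_and_or.mp h0 with hx | hy
      · have : 0 < x ^ 2 := by positivity
        nlinarith [sq_nonneg y]
      · have : 0 < y ^ 2 := by positivity
        nlinarith [sq_nonneg x]
    have hε : 0 < 1 - c := by linarith
    have hs : 0 < Real.sqrt (x ^ 2 + y ^ 2) := Real.sqrt_pos.mpr hxy
    have hs2 : Real.sqrt (x ^ 2 + y ^ 2) ^ 2 = x ^ 2 + y ^ 2 := Real.sq_sqrt hxy.le
    have hs4 : Real.sqrt (x ^ 2 + y ^ 2) ^ 4 = (x ^ 2 + y ^ 2) ^ 2 := by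
      rw [show Real.sqrt (x ^ 2 + y ^ 2) ^ 4 = (Real.sqrt (x ^ 2 + y ^ 2) ^ 2) ^ 2 by ring, hs2]
    have habsx : |x| ≤ Real.sqrt (x ^ 2 + y ^ 2) := by
      rw [← Real.sqrt_sq_eq_abs]
      exact Real.sqrt_le_sqrt (by nlinarith [sq_nonneg y])
    set s := Real.sqrt (x ^ 2 + y ^ 2) with hsdef
    clear_value s
    set N := s ^ 2 + |x| * s with hN
    set D := K₁ * s ^ 4 + s ^ 2 - c * x ^ 2 with hD
    set D₁ := 1 * y ^ 2 + ((1 - c) * x ^ 2 + K₁ * x ^ 4) with hD1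
    set D₂ := (1 - c) * x ^ 2 + (1 * y ^ 2 + K₁ * y ^ 4) with hD2
    clear_value N D D₁ D₂
    have hD1pos : 0 < D₁ := by
      rw [hD1]
      rcases not_and_or.mp h0 with hx | hy
      · have h1 : 0 < x ^ 2 := by positivity
        nlinarith [sq_nonneg y, pow_pos h1 2, mul_pos hK₁ (pow_pos h1 2)]
      · have h1 : 0 < y ^ 2 := by positivity
        nlinarith [sq_nonneg x, sq_nonneg (x ^ 2), mul_nonneg hK₁.le (sq_nonneg (x ^ 2))]
    have hD2pos : 0 < D₂ := by
      rw [hD2]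
      rcases not_and_or.mp h0 with hx | hy
      · have h1 : 0 < x ^ 2 := by positivity
        nlinarith [sq_nonneg y, sq_nonneg (y ^ 2), mul_nonneg hK₁.le (sq_nonneg (y ^ 2))]
      · have h1 : 0 < y ^ 2 := by positivity
        nlinarith [sq_nonneg x, mul_pos hK₁ (pow_pos h1 2)]
    have hDD1 : D₁ ≤ D := by
      rw [hD, hD1, hs4, hs2]
      nlinarith [mul_nonneg hK₁.le (mul_nonneg (sq_nonneg x) (sq_nonneg y)),
        mul_nonneg hK₁.le (sq_nonneg (y ^ 2))]
    have hDD2 : D₂ ≤ D := by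
      rw [hD, hD2, hs4, hs2]
      nlinarith [mul_nonneg hK₁.le (mul_nonneg (sq_nonneg x) (sq_nonneg y)),
        mul_nonneg hK₁.le (sq_nonneg (x ^ 2))]
    have hDpos : 0 < D := lt_of_lt_of_le hD1pos hDD1
    have hNnn : 0 ≤ N := by
      rw [hN]
      positivity
    have hN2 : N ^ 2 ≤ 8 * x ^ 4 + 8 * y ^ 4 := by
      have h1 : N ≤ 2 * s ^ 2 := by
        rw [hN]
        nlinarith [mul_le_mul_of_nonneg_right habsx hs.le]
      have h2 : N ^ 2 ≤ (2 * s ^ 2) ^ 2 := by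
        apply pow_le_pow_left₀ hNnn h1
      have h3 : (2 * s ^ 2) ^ 2 = 4 * (s ^ 2) ^ 2 := by ring
      rw [h3, hs2] at h2
      nlinarith [sq_nonneg (x ^ 2 - y ^ 2)]
    have hsq1 : D₁ ^ 2 ≤ D ^ 2 := by nlinarith
    have hsq2 : D₂ ^ 2 ≤ D ^ 2 := by nlinarith
    have e1 := div_le_div_of_nonneg_left (by positivity : (0:ℝ) ≤ 8 * x ^ 4)
      (pow_pos hD1pos 2) hsq1
    have e2 := div_le_div_of_nonneg_left (by positivity : (0:ℝ) ≤ 8 * y ^ 4)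
      (pow_pos hD2pos 2) hsq2
    calc (N / D) ^ 2 = N ^ 2 / D ^ 2 := by rw [div_pow]
      _ ≤ (8 * x ^ 4 + 8 * y ^ 4) / D ^ 2 :=
          div_le_div_of_nonneg_right hN2 (pow_pos hDpos 2).le
      _ = 8 * x ^ 4 / D ^ 2 + 8 * y ^ 4 / D ^ 2 := by ring
      _ ≤ 8 * x ^ 4 / D₁ ^ 2 + 8 * y ^ 4 / D₂ ^ 2 := by linarith
      _ = 8 * x ^ 4 * (D₁ ^ 2)⁻¹ + 8 * y ^ 4 * (D₂ ^ 2)⁻¹ := by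
          rw [div_eq_mul_inv, div_eq_mul_inv]

set_option maxHeartbeats 1000000 in
/-- For `0 ≤ c < 1` and `K₁ > 0`, the function
`ξ ↦ (|ξ|² + |ξ₁||ξ|)/(K₁|ξ|⁴ + |ξ|² − c ξ₁²)` is in `L²(ℝ²)` with
`L²` norm bounded by `C/(1-c)^{1/4}`, `C` depending only on `K₁`. -/
theorem multiplier_L2_estimate (K₁ : ℝ) (hK₁ : 0 < K₁) :
    ∃ C > (0 : ℝ), ∀ c : ℝ, 0 ≤ c → c < 1 →
      MemLp (fun ξ : ℝ × ℝ =>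
          (Real.sqrt (ξ.1 ^ 2 + ξ.2 ^ 2) ^ 2 + |ξ.1| * Real.sqrt (ξ.1 ^ 2 + ξ.2 ^ 2)) /
            (K₁ * Real.sqrt (ξ.1 ^ 2 + ξ.2 ^ 2) ^ 4 + Real.sqrt (ξ.1 ^ 2 + ξ.2 ^ 2) ^ 2
              - c * ξ.1 ^ 2))
        2 (volume : Measure (ℝ × ℝ)) ∧
      eLpNorm (fun ξ : ℝ × ℝ =>
          (Real.sqrt (ξ.1 ^ 2 + ξ.2 ^ 2) ^ 2 + |ξ.1| * Real.sqrt (ξ.1 ^ 2 + ξ.2 ^ 2)) /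
            (K₁ * Real.sqrt (ξ.1 ^ 2 + ξ.2 ^ 2) ^ 4 + Real.sqrt (ξ.1 ^ 2 + ξ.2 ^ 2) ^ 2
              - c * ξ.1 ^ 2))
        2 (volume : Measure (ℝ × ℝ)) ≤ ENNReal.ofReal (C / (1 - c) ^ ((1 : ℝ) / 4)) := by
  refine ⟨Real.sqrt (32 * π / K₁), Real.sqrt_pos.mpr (by positivity), fun c hc hc1 => ?_⟩
  have hε : 0 < 1 - c := by linarith
  set f : ℝ × ℝ → ℝ := fun ξ : ℝ × ℝ =>
    (Real.sqrt (ξ.1 ^ 2 + ξ.2 ^ 2) ^ 2 + |ξ.1| * Real.sqrt (ξ.1 ^ 2 + ξ.2 ^ 2)) /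
      (K₁ * Real.sqrt (ξ.1 ^ 2 + ξ.2 ^ 2) ^ 4 + Real.sqrt (ξ.1 ^ 2 + ξ.2 ^ 2) ^ 2
        - c * ξ.1 ^ 2) with hf
  -- measurability
  have hsm : Measurable fun ξ : ℝ × ℝ => Real.sqrt (ξ.1 ^ 2 + ξ.2 ^ 2) :=
    (Real.continuous_sqrt.comp ((continuous_fst.pow 2).add (continuous_snd.pow 2))).measurable
  have hmeasf : Measurable f := by
    apply Measurable.div
    · exact (hsm.pow_const 2).add ((measurable_fst.abs).mul hsm)
    · exact (((hsm.pow_const 4).const_mul K₁).add (hsm.pow_const 2)).sub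
        ((measurable_fst.pow_const 2).const_mul c)
  -- measurability of the two bound pieces
  have hm1 : Measurable fun ξ : ℝ × ℝ =>
      ENNReal.ofReal (8 * ξ.1 ^ 4 * ((1 * ξ.2 ^ 2 + ((1 - c) * ξ.1 ^ 2 + K₁ * ξ.1 ^ 4)) ^ 2)⁻¹) := by
    apply ENNReal.measurable_ofReal.comp
    exact ((measurable_fst.pow_const 4).const_mul 8).mul
      ((((measurable_snd.pow_const 2).const_mul 1).add
        (((measurable_fst.pow_const 2).const_mul (1 - c)).add
          ((measurable_fst.pow_const 4).const_mul K₁))).pow_const 2).inv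
  have hm2 : Measurable fun ξ : ℝ × ℝ =>
      ENNReal.ofReal (8 * ξ.2 ^ 4 * (((1 - c) * ξ.1 ^ 2 + (1 * ξ.2 ^ 2 + K₁ * ξ.2 ^ 4)) ^ 2)⁻¹) := by
    apply ENNReal.measurable_ofReal.comp
    exact ((measurable_snd.pow_const 4).const_mul 8).mul
      ((((measurable_fst.pow_const 2).const_mul (1 - c)).add
        (((measurable_snd.pow_const 2).const_mul 1).add
          ((measurable_snd.pow_const 4).const_mul K₁))).pow_const 2).inv
  -- term 1 bound
  have hT1 : (∫⁻ ξ : ℝ × ℝ,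
      ENNReal.ofReal (8 * ξ.1 ^ 4 * ((1 * ξ.2 ^ 2 + ((1 - c) * ξ.1 ^ 2 + K₁ * ξ.1 ^ 4)) ^ 2)⁻¹)) ≤
      ENNReal.ofReal (16 * π / (K₁ * Real.sqrt (1 - c))) := by
    rw [MeasureTheory.Measure.volume_eq_prod, lintegral_prod _ hm1.aemeasurable]
    have hinner : ∀ x : ℝ, (∫⁻ y : ℝ,
        ENNReal.ofReal (8 * x ^ 4 * ((1 * y ^ 2 + ((1 - c) * x ^ 2 + K₁ * x ^ 4)) ^ 2)⁻¹)) ≤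
        ENNReal.ofReal ((8 * π) * (|x| /
          (((1 - c) + K₁ * x ^ 2) * Real.sqrt ((1 - c) + K₁ * x ^ 2)))) := by
      intro x
      rcases eq_or_ne x 0 with rfl | hx
      · simp
      · have hA : 0 < (1 - c) * x ^ 2 + K₁ * x ^ 4 := by positivity
        calc (∫⁻ y : ℝ,
            ENNReal.ofReal (8 * x ^ 4 * ((1 * y ^ 2 + ((1 - c) * x ^ 2 + K₁ * x ^ 4)) ^ 2)⁻¹))
            = ENNReal.ofReal (8 * x ^ 4) * ∫⁻ y : ℝ,
              ENNReal.ofReal ((( 1 * y ^ 2 + ((1 - c) * x ^ 2 + K₁ * x ^ 4)) ^ 2)⁻¹) := by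
              simp_rw [ENNReal.ofReal_mul (by positivity : (0:ℝ) ≤ 8 * x ^ 4)]
              rw [lintegral_const_mul' _ _ ENNReal.ofReal_ne_top]
          _ ≤ ENNReal.ofReal (8 * x ^ 4) * ENNReal.ofReal
              (π / (Real.sqrt 1 * (((1 - c) * x ^ 2 + K₁ * x ^ 4) *
                Real.sqrt ((1 - c) * x ^ 2 + K₁ * x ^ 4)))) :=
              mul_le_mul_right (lintegral_inv_sq_bound 1 _ one_pos hA) _
          _ = ENNReal.ofReal ((8 * π) * (|x| /
              (((1 - c) + K₁ * x ^ 2) * Real.sqrt ((1 - c) + K₁ * x ^ 2)))) := by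
              rw [← ENNReal.ofReal_mul (by positivity : (0:ℝ) ≤ 8 * x ^ 4)]
              congr 1
              have hq := quart_identity (1 - c) K₁ (Real.sqrt 1) x hε hK₁
              calc 8 * x ^ 4 * (π / (Real.sqrt 1 * (((1 - c) * x ^ 2 + K₁ * x ^ 4) *
                  Real.sqrt ((1 - c) * x ^ 2 + K₁ * x ^ 4))))
                  = 8 * (x ^ 4 * (π / (Real.sqrt 1 * (((1 - c) * x ^ 2 + K₁ * x ^ 4) *
                    Real.sqrt ((1 - c) * x ^ 2 + K₁ * x ^ 4))))) := by ring
                _ = 8 * ((π / Real.sqrt 1) * (|x| /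
                    (((1 - c) + K₁ * x ^ 2) * Real.sqrt ((1 - c) + K₁ * x ^ 2)))) := by rw [hq]
                _ = (8 * π) * (|x| /
                    (((1 - c) + K₁ * x ^ 2) * Real.sqrt ((1 - c) + K₁ * x ^ 2))) := by
                    rw [Real.sqrt_one]; ring
    calc (∫⁻ x : ℝ, ∫⁻ y : ℝ,
        ENNReal.ofReal (8 * x ^ 4 * ((1 * y ^ 2 + ((1 - c) * x ^ 2 + K₁ * x ^ 4)) ^ 2)⁻¹))
        ≤ ∫⁻ x : ℝ, ENNReal.ofReal ((8 * π) * (|x| /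
            (((1 - c) + K₁ * x ^ 2) * Real.sqrt ((1 - c) + K₁ * x ^ 2)))) :=
          lintegral_mono hinner
      _ = ENNReal.ofReal (8 * π) * ∫⁻ x : ℝ, ENNReal.ofReal (|x| /
            (((1 - c) + K₁ * x ^ 2) * Real.sqrt ((1 - c) + K₁ * x ^ 2))) := by
          simp_rw [ENNReal.ofReal_mul (by positivity : (0:ℝ) ≤ 8 * π)]
          rw [lintegral_const_mul' _ _ ENNReal.ofReal_ne_top]
      _ ≤ ENNReal.ofReal (8 * π) * ENNReal.ofReal (2 / (K₁ * Real.sqrt (1 - c))) :=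
          mul_le_mul_right (lintegral_abs_div_bound (1 - c) K₁ hε hK₁) _
      _ ≤ ENNReal.ofReal (16 * π / (K₁ * Real.sqrt (1 - c))) := by
          rw [← ENNReal.ofReal_mul (by positivity : (0:ℝ) ≤ 8 * π)]
          apply ENNReal.ofReal_le_ofReal
          have : 8 * π * (2 / (K₁ * Real.sqrt (1 - c)))
              = 16 * π / (K₁ * Real.sqrt (1 - c)) := by ring
          rw [this]
  -- term 2 bound
  have hT2 : (∫⁻ ξ : ℝ × ℝ,
      ENNReal.ofReal (8 * ξ.2 ^ 4 * (((1 - c) * ξ.1 ^ 2 + (1 * ξ.2 ^ 2 + K₁ * ξ.2 ^ 4)) ^ 2)⁻¹)) ≤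
      ENNReal.ofReal (16 * π / (K₁ * Real.sqrt (1 - c))) := by
    rw [MeasureTheory.Measure.volume_eq_prod, lintegral_prod_symm _ hm2.aemeasurable]
    have hinner : ∀ y : ℝ, (∫⁻ x : ℝ,
        ENNReal.ofReal (8 * y ^ 4 * (((1 - c) * x ^ 2 + (1 * y ^ 2 + K₁ * y ^ 4)) ^ 2)⁻¹)) ≤
        ENNReal.ofReal ((8 * (π / Real.sqrt (1 - c))) * (|y| /
          ((1 + K₁ * y ^ 2) * Real.sqrt (1 + K₁ * y ^ 2)))) := by
      intro y
      rcases eq_or_ne y 0 with rfl | hy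
      · simp
      · have hB : 0 < 1 * y ^ 2 + K₁ * y ^ 4 := by positivity
        calc (∫⁻ x : ℝ,
            ENNReal.ofReal (8 * y ^ 4 * (((1 - c) * x ^ 2 + (1 * y ^ 2 + K₁ * y ^ 4)) ^ 2)⁻¹))
            = ENNReal.ofReal (8 * y ^ 4) * ∫⁻ x : ℝ,
              ENNReal.ofReal ((((1 - c) * x ^ 2 + (1 * y ^ 2 + K₁ * y ^ 4)) ^ 2)⁻¹) := by
              simp_rw [ENNReal.ofReal_mul (by positivity : (0:ℝ) ≤ 8 * y ^ 4)]
              rw [lintegral_const_mul' _ _ ENNReal.ofReal_ne_top]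
          _ ≤ ENNReal.ofReal (8 * y ^ 4) * ENNReal.ofReal
              (π / (Real.sqrt (1 - c) * ((1 * y ^ 2 + K₁ * y ^ 4) *
                Real.sqrt (1 * y ^ 2 + K₁ * y ^ 4)))) :=
              mul_le_mul_right (lintegral_inv_sq_bound (1 - c) _ hε hB) _
          _ = ENNReal.ofReal ((8 * (π / Real.sqrt (1 - c))) * (|y| /
              ((1 + K₁ * y ^ 2) * Real.sqrt (1 + K₁ * y ^ 2)))) := by
              rw [← ENNReal.ofReal_mul (by positivity : (0:ℝ) ≤ 8 * y ^ 4)]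
              congr 1
              have hq := quart_identity 1 K₁ (Real.sqrt (1 - c)) y one_pos hK₁
              calc 8 * y ^ 4 * (π / (Real.sqrt (1 - c) * ((1 * y ^ 2 + K₁ * y ^ 4) *
                  Real.sqrt (1 * y ^ 2 + K₁ * y ^ 4))))
                  = 8 * (y ^ 4 * (π / (Real.sqrt (1 - c) * ((1 * y ^ 2 + K₁ * y ^ 4) *
                    Real.sqrt (1 * y ^ 2 + K₁ * y ^ 4))))) := by ring
                _ = 8 * ((π / Real.sqrt (1 - c)) * (|y| /
                    ((1 + K₁ * y ^ 2) * Real.sqrt (1 + K₁ * y ^ 2)))) := by rw [hq]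
                _ = (8 * (π / Real.sqrt (1 - c))) * (|y| /
                    ((1 + K₁ * y ^ 2) * Real.sqrt (1 + K₁ * y ^ 2))) := by ring
    calc (∫⁻ y : ℝ, ∫⁻ x : ℝ,
        ENNReal.ofReal (8 * y ^ 4 * (((1 - c) * x ^ 2 + (1 * y ^ 2 + K₁ * y ^ 4)) ^ 2)⁻¹))
        ≤ ∫⁻ y : ℝ, ENNReal.ofReal ((8 * (π / Real.sqrt (1 - c))) * (|y| /
            ((1 + K₁ * y ^ 2) * Real.sqrt (1 + K₁ * y ^ 2)))) :=
          lintegral_mono hinner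
      _ = ENNReal.ofReal (8 * (π / Real.sqrt (1 - c))) * ∫⁻ y : ℝ, ENNReal.ofReal (|y| /
            ((1 + K₁ * y ^ 2) * Real.sqrt (1 + K₁ * y ^ 2))) := by
          simp_rw [ENNReal.ofReal_mul (by positivity : (0:ℝ) ≤ 8 * (π / Real.sqrt (1 - c)))]
          rw [lintegral_const_mul' _ _ ENNReal.ofReal_ne_top]
      _ ≤ ENNReal.ofReal (8 * (π / Real.sqrt (1 - c))) *
            ENNReal.ofReal (2 / (K₁ * Real.sqrt 1)) :=
          mul_le_mul_right (lintegral_abs_div_bound 1 K₁ one_pos hK₁) _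
      _ ≤ ENNReal.ofReal (16 * π / (K₁ * Real.sqrt (1 - c))) := by
          rw [← ENNReal.ofReal_mul (by positivity : (0:ℝ) ≤ 8 * (π / Real.sqrt (1 - c)))]
          apply ENNReal.ofReal_le_ofReal
          rw [Real.sqrt_one]
          have : 8 * (π / Real.sqrt (1 - c)) * (2 / (K₁ * 1))
              = 16 * π / (K₁ * Real.sqrt (1 - c)) := by
            field_simp
            ring
          rw [this]
  -- total bound on the squared L² integral
  have hT : (∫⁻ ξ : ℝ × ℝ, (‖f ξ‖₊ : ℝ≥0∞) ^ (2 : ℝ)) ≤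
      ENNReal.ofReal (32 * π / (K₁ * Real.sqrt (1 - c))) := by
    have hpt : ∀ ξ : ℝ × ℝ, (‖f ξ‖₊ : ℝ≥0∞) ^ (2 : ℝ) ≤
        ENNReal.ofReal (8 * ξ.1 ^ 4 * ((1 * ξ.2 ^ 2 + ((1 - c) * ξ.1 ^ 2 + K₁ * ξ.1 ^ 4)) ^ 2)⁻¹) +
        ENNReal.ofReal (8 * ξ.2 ^ 4 * (((1 - c) * ξ.1 ^ 2 + (1 * ξ.2 ^ 2 + K₁ * ξ.2 ^ 4)) ^ 2)⁻¹) := by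
      intro ξ
      have h1 : ((‖f ξ‖₊ : ℝ≥0∞)) ^ (2 : ℝ) = ENNReal.ofReal ((f ξ) ^ 2) := by
        rw [show ((‖f ξ‖₊ : ℝ≥0∞)) = ‖f ξ‖ₑ from rfl, Real.enorm_eq_ofReal_abs,
          ENNReal.ofReal_rpow_of_nonneg (abs_nonneg _) (by norm_num : (0:ℝ) ≤ 2)]
        congr 1
        rw [show ((2:ℝ) = ((2:ℕ):ℝ)) by norm_num, Real.rpow_natCast, sq_abs]
      rw [h1, ← ENNReal.ofReal_add (by positivity) (by positivity)]
      exact ENNReal.ofReal_le_ofReal (pointwise_bound K₁ c hK₁ hc hc1 ξ.1 ξ.2)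
    calc ∫⁻ ξ : ℝ × ℝ, (‖f ξ‖₊ : ℝ≥0∞) ^ (2 : ℝ)
        ≤ ∫⁻ ξ : ℝ × ℝ,
          (ENNReal.ofReal (8 * ξ.1 ^ 4 * ((1 * ξ.2 ^ 2 + ((1 - c) * ξ.1 ^ 2 + K₁ * ξ.1 ^ 4)) ^ 2)⁻¹) +
          ENNReal.ofReal (8 * ξ.2 ^ 4 * (((1 - c) * ξ.1 ^ 2 + (1 * ξ.2 ^ 2 + K₁ * ξ.2 ^ 4)) ^ 2)⁻¹)) :=
          lintegral_mono hpt
      _ = (∫⁻ ξ : ℝ × ℝ,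
          ENNReal.ofReal (8 * ξ.1 ^ 4 * ((1 * ξ.2 ^ 2 + ((1 - c) * ξ.1 ^ 2 + K₁ * ξ.1 ^ 4)) ^ 2)⁻¹)) +
          ∫⁻ ξ : ℝ × ℝ,
          ENNReal.ofReal (8 * ξ.2 ^ 4 * (((1 - c) * ξ.1 ^ 2 + (1 * ξ.2 ^ 2 + K₁ * ξ.2 ^ 4)) ^ 2)⁻¹) :=
          lintegral_add_left hm1 _
      _ ≤ ENNReal.ofReal (16 * π / (K₁ * Real.sqrt (1 - c))) +
          ENNReal.ofReal (16 * π / (K₁ * Real.sqrt (1 - c))) := add_le_add hT1 hT2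
      _ = ENNReal.ofReal (32 * π / (K₁ * Real.sqrt (1 - c))) := by
          rw [← ENNReal.ofReal_add (by positivity) (by positivity)]
          congr 1
          ring
  -- conclude
  have hnorm : eLpNorm f 2 (volume : Measure (ℝ × ℝ)) ≤
      ENNReal.ofReal (Real.sqrt (32 * π / K₁) / (1 - c) ^ ((1 : ℝ) / 4)) := by
    rw [eLpNorm_eq_lintegral_rpow_enorm_toReal (by norm_num) (by norm_num)]
    simp only [ENNReal.toReal_ofNat]
    calc (∫⁻ ξ : ℝ × ℝ, (‖f ξ‖₊ : ℝ≥0∞) ^ (2 : ℝ)) ^ ((1:ℝ) / 2)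
        ≤ (ENNReal.ofReal (32 * π / (K₁ * Real.sqrt (1 - c)))) ^ ((1:ℝ) / 2) :=
          ENNReal.rpow_le_rpow hT (by norm_num)
      _ = ENNReal.ofReal ((32 * π / (K₁ * Real.sqrt (1 - c))) ^ ((1:ℝ) / 2)) :=
          ENNReal.ofReal_rpow_of_nonneg (by positivity) (by norm_num)
      _ = ENNReal.ofReal (Real.sqrt (32 * π / K₁) / (1 - c) ^ ((1 : ℝ) / 4)) := by
          congr 1
          rw [show 32 * π / (K₁ * Real.sqrt (1 - c))
              = (32 * π / K₁) / Real.sqrt (1 - c) from by ring]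
          rw [Real.div_rpow (by positivity) (Real.sqrt_nonneg _)]
          rw [← Real.sqrt_eq_rpow]
          congr 1
          rw [Real.sqrt_eq_rpow, ← Real.rpow_mul hε.le]
          norm_num
  exact ⟨⟨hmeasf.aestronglyMeasurable, lt_of_le_of_lt hnorm ENNReal.ofReal_lt_top⟩, hnorm⟩
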